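/- For all t ∈ (0,1) and A, B ∈ ℝ≥0 with (A,B) ≠ (0,0) and A, B > 0, one has ((At/(At+B(1−t)))·log(At/(At+B(1−t)))) / (t·log t) ≥ min{A/B, B/A}. -/
import Mathlib


theorem stmt1 (t A B : ℝ) (ht : t ∈ Set.Ioo (0:ℝ) 1) (hA : 0 < A) (hB : 0 < B) :
    min (A / B) (B / A) ≤
      (A * t / (A * t + B * (1 - t)) * Real.log (A * t / (A * t + B * (1 - t))))
        / (t * Real.log t) := by
  obtain ⟨ht0, ht1⟩ := ht
  have h1t : 0 < 1 - t := by linarith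
  set D := A * t + B * (1 - t) with hDdef
  have hD : 0 < D := by positivity
  set s := A * t / D with hsdef
  have hs0 : 0 < s := div_pos (by positivity) hD
  have hs1 : s < 1 := by
    rw [hsdef, div_lt_one hD, hDdef]; nlinarith
  have hlogt : Real.log t < 0 := Real.log_neg ht0 ht1
  have hlogs : Real.log s < 0 := Real.log_neg hs0 hs1
  have hden : t * Real.log t < 0 := mul_neg_of_pos_of_neg ht0 hlogt
  rw [le_div_iff_of_neg hden]
  rcases le_total A B with hAB | hBA
  · have hmin : min (A / B) (B / A) = A / B := by
      apply min_eq_left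
      rw [div_le_div_iff₀ hB hA]; nlinarith
    rw [hmin]
    have hst : s ≤ t := by
      rw [hsdef, div_le_iff₀ hD, hDdef]
      nlinarith [mul_nonneg (mul_nonneg (sub_nonneg.2 hAB) h1t.le) ht0.le]
    have hs_ge : A / B * t ≤ s := by
      rw [hsdef, le_div_iff₀ hD, div_mul_eq_mul_div, div_mul_eq_mul_div, div_le_iff₀ hB,
        hDdef]
      nlinarith [mul_nonneg (mul_nonneg (mul_nonneg hA.le ht0.le) (sub_nonneg.2 hAB)) ht0.le]
    have h1 : Real.log s ≤ Real.log t := Real.log_le_log hs0 hst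
    nlinarith [mul_le_mul_of_nonneg_left h1 hs0.le,
      mul_le_mul_of_nonpos_right hs_ge hlogt.le]
  · have hmin : min (A / B) (B / A) = B / A := by
      apply min_eq_right
      rw [div_le_div_iff₀ hA hB]; nlinarith
    rw [hmin]
    have hts : t ≤ s := by
      rw [hsdef, le_div_iff₀ hD, hDdef]
      nlinarith [mul_nonneg (mul_nonneg (sub_nonneg.2 hBA) h1t.le) ht0.le]
    set c := B / A with hc
    have hc0 : 0 < c := div_pos hB hA
    have hc1 : c ≤ 1 := (div_le_one hA).2 hBA
    have hx : (1 / t : ℝ) ∈ Set.Ioi (0:ℝ) := by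
      simp [Set.mem_Ioi]; positivity
    have hy : (1 : ℝ) ∈ Set.Ioi (0:ℝ) := by simp
    have key := (strictConcaveOn_log_Ioi.concaveOn).2 hx hy hc0.le
      (by linarith : (0:ℝ) ≤ 1 - c) (by ring)
    simp only [smul_eq_mul, Real.log_one, mul_zero, mul_one, add_zero] at key
    have heq : c * (1 / t) + (1 - c) = 1 / s := by
      rw [hc, hsdef, hDdef]
      field_simp
      ring
    rw [heq] at key
    rw [one_div, one_div, Real.log_inv, Real.log_inv] at key
    -- key : c * (-Real.log t) ≤ -Real.log s
    nlinarith [mul_le_mul_of_nonneg_left key hs0.le,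
      mul_le_mul_of_nonpos_right hts (by nlinarith : c * Real.log t ≤ 0)]
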